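/- arXiv:2007.08845 — 2 statements merged into one kernel-verified Lean document; each statement's English description precedes it below -/
import Mathlib

section
/- A Hausdorff topological space (Y,τ) is a continuous open image of the Sorgenfrey line (i.e., there exists a surjection f from the Sorgenfrey line onto Y that is continuous and an open map) if and only if there exists a Sorgenfrey base for (Y,τ). -/
open Set Filter Topology TopologicalSpace Function

noncomputable section

/-- The Sorgenfrey topology on `ℝ`: generated by half-open intervals `[a, b)`. -/
def sorgenfreyTop : TopologicalSpace ℝ :=
  TopologicalSpace.generateFrom {s : Set ℝ | ∃ a b : ℝ, s = Set.Ico a b}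

/-- The initial segment `p↾n` of an infinite sequence, as a list. -/
def restr (p : ℕ → ℕ) (n : ℕ) : List ℕ := (List.range n).map p

/-- `fruit V p = ⋂ n, V (p↾n)`. -/
def fruit {X : Type*} (V : List ℕ → Set X) (p : ℕ → ℕ) : Set X := ⋂ n, V (restr p n)

/-- A Souslin scheme is covering if `V ⟨⟩ = X` and `V a = ⋃ n, V (a ⌢ n)`. -/
def Covering {X : Type*} (V : List ℕ → Set X) : Prop :=
  V [] = Set.univ ∧ ∀ a : List ℕ, V a = ⋃ n : ℕ, V (a ++ [n])

/-- A Souslin scheme is complete if every fruit is nonempty. -/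
def CompleteScheme {X : Type*} (V : List ℕ → Set X) : Prop :=
  ∀ q : ℕ → ℕ, (fruit V q).Nonempty

/-- A Souslin scheme has strict branches if every fruit is a singleton. -/
def StrictBranches {X : Type*} (V : List ℕ → Set X) : Prop :=
  ∀ q : ℕ → ℕ, ∃ x : X, fruit V q = {x}

/-- A Souslin scheme is locally strict. -/
def LocallyStrict {X : Type*} (V : List ℕ → Set X) : Prop :=
  (∀ a : List ℕ, V a = ⋃ n : ℕ, V (a ++ [n])) ∧
  ∀ a : List ℕ, ∀ m k : ℕ, m ≠ k → V (a ++ [m]) ∩ V (a ++ [k]) = ∅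

/-- `q ◁ p` for infinite sequences: `q↾n = p↾n` and `q n < p n` for some `n`. -/
def tri (q p : ℕ → ℕ) : Prop := ∃ n : ℕ, restr q n = restr p n ∧ q n < p n

/-- `q ⊴ p` for infinite sequences. -/
def trieq (q p : ℕ → ℕ) : Prop := tri q p ∨ q = p

/-- `q ◁ s` where `q` is an infinite sequence and `s` a finite one. -/
def triL (q : ℕ → ℕ) (s : List ℕ) : Prop :=
  ∃ n : ℕ, ∃ h : n < s.length, restr q n = s.take n ∧ q n < s.get ⟨n, h⟩

/-- `rsequences(q, n) = {p | q ◁ p ∧ q↾n = p↾n}`. -/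
def rsequences (q : ℕ → ℕ) (n : ℕ) : Set (ℕ → ℕ) :=
  {p | tri q p ∧ restr q n = restr p n}

/-- `rsubtree(q, n)`: finite sequences `s` such that `q↾n ⊏ s` and `q ◁ s`. -/
def rsubtree (q : ℕ → ℕ) (n : ℕ) : Set (List ℕ) :=
  {s | restr q n <+: s ∧ restr q n ≠ s ∧ triL q s}

/-- `cut(V, q, n) = ⋃ {fruit(V, p) : p ∈ rsequences(q, n)}`. -/
def cut {X : Type*} (V : List ℕ → Set X) (q : ℕ → ℕ) (n : ℕ) : Set X :=
  ⋃ p ∈ rsequences q n, fruit V p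

/-- `branches(V, x) = {q | x ∈ fruit(V, q)}`. -/
def branches {X : Type*} (V : List ℕ → Set X) (x : X) : Set (ℕ → ℕ) :=
  {q | x ∈ fruit V q}

/-- `q` is a `τ`-base branch of `x` in `V`: `q ∈ branches(V, x)` and
`{cut(V, q, m) ∪ {x} : m ∈ ℕ}` is a neighborhood base of open sets at `x`. -/
def IsBaseBranch {X : Type*} (τ : TopologicalSpace X) (V : List ℕ → Set X)
    (q : ℕ → ℕ) (x : X) : Prop :=
  x ∈ fruit V q ∧ (∀ m : ℕ, IsOpen[τ] (cut V q m ∪ {x})) ∧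
    (@nhds X τ x).HasBasis (fun _ : ℕ => True) (fun m : ℕ => cut V q m ∪ {x})

/-- `BB(V, x, τ)`: the set of `τ`-base branches of `x` in `V`. -/
def BB {X : Type*} (τ : TopologicalSpace X) (V : List ℕ → Set X) (x : X) : Set (ℕ → ℕ) :=
  {q | IsBaseBranch τ V q x}

/-- A Sorgenfrey base for a space: an open complete covering Souslin scheme
satisfying (S1) and (S2). -/
def IsSorgenfreyBase {X : Type*} (τ : TopologicalSpace X) (V : List ℕ → Set X) : Prop :=
  (∀ a : List ℕ, IsOpen[τ] (V a)) ∧ CompleteScheme V ∧ Covering V ∧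
  (∀ x : X, ∀ q ∈ branches V x, ∀ n : ℕ, ∃ t ∈ BB τ V x, restr t n = restr q n) ∧
  (∀ q : ℕ → ℕ, ∃ z : X, q ∈ BB τ V z)

/-- The Souslin scheme `S` on the Baire set: `S a = {p | a ⊑ p}`. -/
def SchemeS (a : List ℕ) : Set (ℕ → ℕ) := {p | restr p a.length = a}

/-- The topology `σ_𝕊` on `ℕ → ℕ` generated by the base
`{cut(S, p, n) ∪ {p} : p ∈ ℕ → ℕ, n ∈ ℕ}`. -/
def sigmaS : TopologicalSpace (ℕ → ℕ) :=
  TopologicalSpace.generateFrom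
    {U : Set (ℕ → ℕ) | ∃ p : ℕ → ℕ, ∃ n : ℕ, U = cut SchemeS p n ∪ {p}}

/- ### restr lemmas -/

@[simp] lemma restr_zero (q : ℕ → ℕ) : restr q 0 = [] := rfl

lemma restr_succ (q : ℕ → ℕ) (n : ℕ) : restr q (n+1) = restr q n ++ [q n] := by
  simp [restr, List.range_succ]

@[simp] lemma restr_length (q : ℕ → ℕ) (n : ℕ) : (restr q n).length = n := by
  simp [restr]

lemma restr_eq_iff {q p : ℕ → ℕ} {n : ℕ} :
    restr q n = restr p n ↔ ∀ i < n, q i = p i := by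
  induction n with
  | zero => simp
  | succ n ih =>
    rw [restr_succ, restr_succ]
    constructor
    · intro h
      have h2 := congrArg List.reverse h
      simp only [List.reverse_append, List.reverse_cons, List.reverse_nil, List.nil_append,
        List.cons_append, List.cons.injEq] at h2
      obtain ⟨h3, h4⟩ := h2
      have h5 : restr q n = restr p n := by
        simpa using congrArg List.reverse h4
      intro i hi
      rcases Nat.lt_succ_iff_lt_or_eq.1 hi with hi | rfl
      · exact ih.1 h5 i hi
      · exact h3
    · intro h
      have h1 : restr q n = restr p n := ih.2 fun i hi => h i (Nat.lt_succ_of_lt hi)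
      rw [h1, h (n) (Nat.lt_succ_self n)]

lemma restr_take {q : ℕ → ℕ} {m n : ℕ} (h : m ≤ n) : (restr q n).take m = restr q m := by
  simp [restr, ← List.map_take, List.take_range, Nat.min_eq_left h]

lemma restr_prefix_eq {q p : ℕ → ℕ} {m n : ℕ} (h : m ≤ n) (he : restr q n = restr p n) :
    restr q m = restr p m := by
  rw [← restr_take (q := q) h, ← restr_take (q := p) h, he]

/- ### Sorgenfrey basics -/

lemma sorg_isOpen_Ico (a b : ℝ) : IsOpen[sorgenfreyTop] (Ico a b) :=
  TopologicalSpace.isOpen_generateFrom_of_mem ⟨a, b, rfl⟩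

lemma sorg_basis : @TopologicalSpace.IsTopologicalBasis ℝ sorgenfreyTop
    {s : Set ℝ | ∃ a b : ℝ, s = Set.Ico a b} := by
  letI := sorgenfreyTop
  refine TopologicalSpace.isTopologicalBasis_of_isOpen_of_nhds
    (fun u hu => ?_) (fun x u hxu hu => ?_)
  · obtain ⟨a, b, rfl⟩ := hu
    exact sorg_isOpen_Ico a b
  · induction hu with
    | basic s hs =>
      obtain ⟨a, b, rfl⟩ := hs
      exact ⟨Ico a b, ⟨a, b, rfl⟩, hxu, subset_rfl⟩
    | univ => exact ⟨Ico x (x+1), ⟨x, x+1, rfl⟩, ⟨le_refl x, by linarith⟩, subset_univ _⟩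
    | inter s t hs ht ihs iht =>
      obtain ⟨hxs, hxt⟩ := hxu
      obtain ⟨v, ⟨a, b, rfl⟩, hxv, hvs⟩ := ihs hxs
      obtain ⟨w, ⟨c, d, rfl⟩, hxw, hwt⟩ := iht hxt
      refine ⟨Ico (max a c) (min b d), ⟨_, _, rfl⟩, ?_, ?_⟩
      · exact ⟨max_le hxv.1 hxw.1, lt_min hxv.2 hxw.2⟩
      · intro y hy
        exact ⟨hvs ⟨le_trans (le_max_left a c) hy.1, lt_of_lt_of_le hy.2 (min_le_left b d)⟩,
          hwt ⟨le_trans (le_max_right a c) hy.1, lt_of_lt_of_le hy.2 (min_le_right b d)⟩⟩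
    | sUnion S hS ih =>
      obtain ⟨t, htS, hxt⟩ := hxu
      obtain ⟨v, hv, hxv, hvt⟩ := ih t htS hxt
      exact ⟨v, hv, hxv, hvt.trans (subset_sUnion_of_mem htS)⟩

lemma sorg_nhds_basis (x : ℝ) :
    (@nhds ℝ sorgenfreyTop x).HasBasis (fun b => x < b) (fun b => Ico x b) := by
  letI := sorgenfreyTop
  constructor
  intro t
  rw [sorg_basis.mem_nhds_iff]
  constructor
  · rintro ⟨s, ⟨a, b, rfl⟩, hxs, hst⟩
    exact ⟨b, hxs.2, fun y hy => hst ⟨le_trans hxs.1 hy.1, hy.2⟩⟩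
  · rintro ⟨b, hb, hsub⟩
    exact ⟨Ico x b, ⟨x, b, rfl⟩, ⟨le_refl x, hb⟩, hsub⟩

lemma sorg_mem_nhds {x : ℝ} {t : Set ℝ} :
    t ∈ @nhds ℝ sorgenfreyTop x ↔ ∃ b, x < b ∧ Ico x b ⊆ t :=
  (sorg_nhds_basis x).mem_iff

/-- enumeration of ℤ -/
def gg (k : ℕ) : ℝ := ((Denumerable.ofNat ℤ k : ℤ) : ℝ)

lemma gg_int (k : ℕ) : ∃ z : ℤ, gg k = (z : ℝ) := ⟨_, rfl⟩

lemma gg_inj : Function.Injective gg := by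
  intro a b h
  have h2 : (Denumerable.ofNat ℤ a : ℤ) = Denumerable.ofNat ℤ b := Int.cast_injective h
  have h3 := congrArg Encodable.encode h2
  simpa [Denumerable.encode_ofNat] using h3

lemma gg_surj_int (z : ℤ) : ∃ k, gg k = (z : ℝ) := by
  refine ⟨Encodable.encode z, ?_⟩
  simp only [gg, Denumerable.ofNat_encode]

/-- interval endpoints, indexed by REVERSED finite sequences -/
def J : List ℕ → ℝ × ℝ
  | [] => (0, 1)
  | [k] => (gg k, gg k + 1)
  | k :: l :: b =>
    ((J (l :: b)).2 - ((J (l :: b)).2 - (J (l :: b)).1) / 2 ^ k,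
     (J (l :: b)).2 - ((J (l :: b)).2 - (J (l :: b)).1) / 2 ^ (k + 1))

lemma J_cons {r : List ℕ} (hr : r ≠ []) (k : ℕ) :
    J (k :: r) = ((J r).2 - ((J r).2 - (J r).1) / 2 ^ k,
      (J r).2 - ((J r).2 - (J r).1) / 2 ^ (k + 1)) := by
  match r with
  | [] => exact absurd rfl hr
  | l :: b => rfl

lemma J_lt : ∀ {r : List ℕ}, r ≠ [] → (J r).1 < (J r).2 := by
  intro r
  induction r with
  | nil => intro h; exact absurd rfl h
  | cons k r ih =>
    intro _
    match r with
    | [] => simp [J]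
    | l :: b =>
      have hw : 0 < (J (l :: b)).2 - (J (l :: b)).1 := sub_pos.2 (ih (by simp))
      rw [J_cons (by simp)]
      have h2 : ((J (l :: b)).2 - (J (l :: b)).1) / 2 ^ (k+1) < ((J (l :: b)).2 - (J (l :: b)).1) / 2 ^ k := by
        apply div_lt_div_of_pos_left hw (by positivity)
        exact pow_lt_pow_right₀ one_lt_two (Nat.lt_succ_self k)
      simpa using h2

lemma J_width : ∀ {r : List ℕ}, r ≠ [] → (J r).2 - (J r).1 ≤ 2 * (1/2) ^ r.length := by
  intro r
  induction r with
  | nil => intro h; exact absurd rfl h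
  | cons k r ih =>
    intro _
    match r with
    | [] => norm_num [J]
    | l :: b =>
      have hw : 0 < (J (l :: b)).2 - (J (l :: b)).1 := sub_pos.2 (J_lt (by simp))
      rw [J_cons (by simp)]
      simp only
      have h1 : (J (l::b)).2 - ((J (l::b)).2 - (J (l::b)).1) / 2 ^ (k + 1) -
          ((J (l::b)).2 - ((J (l::b)).2 - (J (l::b)).1) / 2 ^ k)
          = ((J (l::b)).2 - (J (l::b)).1) * (1/2^k - 1/2^(k+1)) := by ring
      rw [h1]
      have h2 : (1:ℝ)/2^k - 1/2^(k+1) ≤ 1/2 := by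
        have : (1:ℝ)/2^k ≤ 1 := by
          rw [div_le_one (by positivity)]
          exact one_le_pow₀ one_le_two
        have h3 : (0:ℝ) ≤ 1/2^(k+1) := by positivity
        have h4 : (1:ℝ)/2^k - 1/2^(k+1) = 1/2^(k+1) := by
          field_simp
          ring
        rw [h4]
        rw [div_le_div_iff₀ (by positivity) (by norm_num)]
        have : (2:ℝ) ≤ 2^(k+1) := by
          calc (2:ℝ) = 2^1 := by norm_num
          _ ≤ 2^(k+1) := by
            apply pow_le_pow_right₀ one_le_two
            omega
        linarith
      calc ((J (l::b)).2 - (J (l::b)).1) * (1/2^k - 1/2^(k+1))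
          ≤ (2 * (1/2)^(l::b).length) * (1/2) := by
            apply mul_le_mul (ih (by simp)) h2 ?_ ?_
            · have : (1:ℝ)/2^k - 1/2^(k+1) = 1/2^(k+1) := by field_simp; ring
              rw [this]; positivity
            · positivity
        _ = 2 * (1/2)^(k :: l :: b).length := by
            simp [List.length_cons]
            ring

lemma sorg_open_mem_nhds {s : Set ℝ} {x : ℝ} (hs : IsOpen[sorgenfreyTop] s) (hx : x ∈ s) :
    s ∈ @nhds ℝ sorgenfreyTop x := by
  letI := sorgenfreyTop
  exact hs.mem_nhds hx

lemma sorg_isOpen_iff {s : Set ℝ} :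
    IsOpen[sorgenfreyTop] s ↔ ∀ x ∈ s, ∃ b, x < b ∧ Ico x b ⊆ s := by
  letI := sorgenfreyTop
  rw [isOpen_iff_mem_nhds]
  exact forall₂_congr fun x hx => sorg_mem_nhds

lemma J_single (k : ℕ) : J [k] = (gg k, gg k + 1) := rfl

section JL
variable {r : List ℕ} {k k' : ℕ}

lemma J_child_lo (hr : r ≠ []) (k : ℕ) : (J r).1 ≤ (J (k :: r)).1 := by
  rw [J_cons hr]
  have hw : 0 < (J r).2 - (J r).1 := sub_pos.2 (J_lt hr)
  simp only
  have h1 : ((J r).2 - (J r).1) / 2 ^ k ≤ (J r).2 - (J r).1 := by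
    apply div_le_self hw.le
    exact one_le_pow₀ one_le_two
  linarith

lemma J_child_hi (hr : r ≠ []) (k : ℕ) : (J (k :: r)).2 < (J r).2 := by
  rw [J_cons hr]
  have hw : 0 < (J r).2 - (J r).1 := sub_pos.2 (J_lt hr)
  have : 0 < ((J r).2 - (J r).1) / 2 ^ (k+1) := by positivity
  simp only
  linarith

lemma J_sib (hr : r ≠ []) (h : k < k') : (J (k :: r)).2 ≤ (J (k' :: r)).1 := by
  rw [J_cons hr, J_cons hr]
  have hw : 0 < (J r).2 - (J r).1 := sub_pos.2 (J_lt hr)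
  simp only
  have : ((J r).2 - (J r).1) / 2 ^ k' ≤ ((J r).2 - (J r).1) / 2 ^ (k+1) := by
    apply div_le_div_of_nonneg_left hw.le (by positivity)
    exact pow_le_pow_right₀ one_le_two h
  linarith

lemma J_cover (hr : r ≠ []) {x : ℝ} (hx : x ∈ Ico (J r).1 (J r).2) :
    ∃ k, x ∈ Ico (J (k :: r)).1 (J (k :: r)).2 := by
  have hw : 0 < (J r).2 - (J r).1 := sub_pos.2 (J_lt hr)
  have hvx : 0 < (J r).2 - x := sub_pos.2 hx.2
  have hfound : ∃ k : ℕ, ((J r).2 - (J r).1) / ((J r).2 - x) < 2 ^ (k+1) := by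
    obtain ⟨k, hk⟩ := pow_unbounded_of_one_lt (((J r).2 - (J r).1) / ((J r).2 - x)) one_lt_two
    exact ⟨k, lt_of_lt_of_le hk (pow_le_pow_right₀ one_le_two (Nat.le_succ k))⟩
  classical
  obtain ⟨k, hk1, hk2⟩ : ∃ k : ℕ, ((J r).2 - (J r).1) / ((J r).2 - x) < 2 ^ (k+1) ∧
      2 ^ k ≤ ((J r).2 - (J r).1) / ((J r).2 - x) := by
    refine ⟨Nat.find hfound, Nat.find_spec hfound, ?_⟩
    rcases Nat.eq_zero_or_pos (Nat.find hfound) with h0 | h0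
    · rw [h0, pow_zero, le_div_iff₀ hvx]
      have : (J r).2 - x ≤ (J r).2 - (J r).1 := by linarith [hx.1]
      linarith
    · have hmin := Nat.find_min hfound (m := Nat.find hfound - 1) (by omega)
      push_neg at hmin
      have h2 : Nat.find hfound - 1 + 1 = Nat.find hfound := by omega
      rwa [h2] at hmin
  rw [le_div_iff₀ hvx] at hk2
  rw [div_lt_iff₀ hvx] at hk1
  refine ⟨k, ?_, ?_⟩
  · rw [J_cons hr]
    simp only
    have h3 : ((J r).2 - (J r).1) / 2^k ≥ (J r).2 - x := by
      rw [ge_iff_le, le_div_iff₀ (by positivity : (0:ℝ) < 2^k)]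
      linarith [hk2]
    linarith
  · rw [J_cons hr]
    simp only
    have h4 : ((J r).2 - (J r).1) / 2^(k+1) < (J r).2 - x := by
      rw [div_lt_iff₀ (by positivity : (0:ℝ) < 2^(k+1))]
      linarith
    linarith

end JL

lemma J_top_cover (x : ℝ) : ∃ k, x ∈ Ico (J [k]).1 (J [k]).2 := by
  obtain ⟨k, hk⟩ := gg_surj_int ⌊x⌋
  refine ⟨k, ?_, ?_⟩ <;> rw [J_single] <;> simp only <;> rw [hk]
  · exact Int.floor_le x
  · exact_mod_cast Int.lt_floor_add_one x

lemma J_top_disj {k k' : ℕ} (h : k ≠ k') :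
    Ico (J [k]).1 (J [k]).2 ∩ Ico (J [k']).1 (J [k']).2 = ∅ := by
  obtain ⟨z, hz⟩ := gg_int k
  obtain ⟨z', hz'⟩ := gg_int k'
  have hzz : z ≠ z' := by
    intro he; exact h (gg_inj (by rw [hz, hz', he]))
  rw [J_single, J_single]
  simp only
  ext y
  simp only [mem_inter_iff, mem_Ico, mem_empty_iff_false, iff_false, not_and]
  rw [hz, hz']
  rintro ⟨h1, h2⟩ h3
  rcases lt_or_gt_of_ne hzz with hlt | hlt
  · have : (z:ℝ) + 1 ≤ z' := by exact_mod_cast Int.add_one_le_iff.2 hlt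
    linarith
  · have : (z':ℝ) + 1 ≤ z := by exact_mod_cast Int.add_one_le_iff.2 hlt
    intro h4
    linarith

/- ### The scheme W on ℝ -/

def lo (a : List ℕ) : ℝ := (J a.reverse).1
def hi (a : List ℕ) : ℝ := (J a.reverse).2
def W (a : List ℕ) : Set ℝ := if a = [] then univ else Ico (lo a) (hi a)

@[simp] lemma W_nil : W [] = univ := rfl

lemma W_ne {a : List ℕ} (h : a ≠ []) : W a = Ico (lo a) (hi a) := if_neg h

lemma rev_append (a : List ℕ) (k : ℕ) : (a ++ [k]).reverse = k :: a.reverse := by simp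

lemma lo_lt_hi {a : List ℕ} (h : a ≠ []) : lo a < hi a :=
  J_lt (by simpa using h)

lemma hi_width {a : List ℕ} (h : a ≠ []) : hi a - lo a ≤ 2 * (1/2) ^ a.length := by
  have := J_width (r := a.reverse) (by simpa using h)
  simpa [hi, lo] using this

lemma W_child_subset (a : List ℕ) (k : ℕ) : W (a ++ [k]) ⊆ W a := by
  rcases eq_or_ne a [] with rfl | h
  · simp
  rw [W_ne (by simp), W_ne h]
  intro x hx
  have h1 := J_child_lo (show a.reverse ≠ [] by simpa using h) k
  have h2 := J_child_hi (show a.reverse ≠ [] by simpa using h) k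
  unfold lo hi at hx ⊢
  rw [rev_append] at hx
  exact ⟨le_trans h1 hx.1, lt_trans hx.2 h2⟩

lemma hi_child_lt {a : List ℕ} (h : a ≠ []) (k : ℕ) : hi (a ++ [k]) < hi a := by
  have := J_child_hi (by simpa using h : a.reverse ≠ []) k
  unfold hi
  rwa [rev_append]

lemma lo_child_le {a : List ℕ} (h : a ≠ []) (k : ℕ) : lo a ≤ lo (a ++ [k]) := by
  have := J_child_lo (by simpa using h : a.reverse ≠ []) k
  unfold lo
  rwa [rev_append]

lemma sib_le {a : List ℕ} (h : a ≠ []) {k k' : ℕ} (hkk : k < k') :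
    hi (a ++ [k]) ≤ lo (a ++ [k']) := by
  have := J_sib (by simpa using h : a.reverse ≠ []) hkk
  unfold lo hi
  rwa [rev_append, rev_append]

lemma W_cover {a : List ℕ} {x : ℝ} (hx : x ∈ W a) : ∃ k, x ∈ W (a ++ [k]) := by
  rcases eq_or_ne a [] with rfl | h
  · obtain ⟨k, hk⟩ := J_top_cover x
    exact ⟨k, by simpa [W_ne (show ([] : List ℕ) ++ [k] ≠ [] by simp), W_ne (show [k] ≠ [] by simp), lo, hi] using hk⟩
  · rw [W_ne h] at hx
    obtain ⟨k, hk⟩ := J_cover (by simpa using h : a.reverse ≠ []) hx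
    refine ⟨k, ?_⟩
    rw [W_ne (by simp), lo, hi, rev_append]
    exact hk

lemma W_covering (a : List ℕ) : W a = ⋃ k : ℕ, W (a ++ [k]) := by
  apply Subset.antisymm
  · intro x hx
    obtain ⟨k, hk⟩ := W_cover hx
    exact mem_iUnion.2 ⟨k, hk⟩
  · exact iUnion_subset fun k => W_child_subset a k

lemma W_disj : ∀ {a b : List ℕ}, a.length = b.length → a ≠ b → W a ∩ W b = ∅ := by
  -- work on reversed lists via strong induction on length
  suffices H : ∀ n (r r' : List ℕ), r.length = n → r'.length = n → r ≠ [] → r ≠ r' →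
      Ico (J r).1 (J r).2 ∩ Ico (J r').1 (J r').2 = ∅ by
    intro a b hlen hne
    rcases eq_or_ne a [] with rfl | ha
    · have hb0 : b = [] := by simpa using hlen.symm
      exact (hne hb0.symm).elim
    have hb : b ≠ [] := by
      intro hb; rw [hb] at hlen; exact ha (by simpa using hlen)
    rw [W_ne ha, W_ne hb]
    exact H a.length a.reverse b.reverse (by simp) (by simp [← hlen]) (by simpa using ha)
      (fun hc => hne (by simpa using congrArg List.reverse hc))
  intro n
  induction n with
  | zero => intro r r' hr _ hne _; exact absurd (List.eq_nil_of_length_eq_zero hr) hne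
  | succ n ih =>
    rintro (_ | ⟨k, s⟩) r' hr hr' hne hrr
    · simp at hr
    rcases r' with _ | ⟨k', s'⟩
    · simp at hr'
    simp only [List.length_cons, Nat.succ.injEq] at hr hr'
    rcases Nat.eq_zero_or_pos n with hn | hn
    · -- top level
      have hs : s = [] := List.eq_nil_of_length_eq_zero (hr.trans hn)
      have hs' : s' = [] := List.eq_nil_of_length_eq_zero (hr'.trans hn)
      subst hs; subst hs'
      have : k ≠ k' := fun h => hrr (by rw [h])
      exact J_top_disj this
    · have hsne : s ≠ [] := by
        intro h; rw [h] at hr; simp at hr; omega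
      have hs'ne : s' ≠ [] := by
        intro h; rw [h] at hr'; simp at hr'; omega
      rcases eq_or_ne s s' with rfl | hss
      · -- siblings
        have hkk : k ≠ k' := fun h => hrr (by rw [h])
        ext x
        simp only [mem_inter_iff, mem_Ico, mem_empty_iff_false, iff_false, not_and]
        rintro ⟨h1, h2⟩ h3
        rcases lt_or_gt_of_ne hkk with hlt | hlt
        · have := J_sib hsne hlt
          intro h4
          linarith
        · have := J_sib hsne hlt
          intro h4
          linarith
      · -- different parents
        have hpar := ih s s' hr hr' hsne hss
        have h1 : Ico (J (k :: s)).1 (J (k :: s)).2 ⊆ Ico (J s).1 (J s).2 := by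
          intro x hx
          exact ⟨le_trans (J_child_lo hsne k) hx.1, lt_trans hx.2 (J_child_hi hsne k)⟩
        have h2 : Ico (J (k' :: s')).1 (J (k' :: s')).2 ⊆ Ico (J s').1 (J s').2 := by
          intro x hx
          exact ⟨le_trans (J_child_lo hs'ne k') hx.1, lt_trans hx.2 (J_child_hi hs'ne k')⟩
        apply eq_empty_of_subset_empty
        calc _ ⊆ Ico (J s).1 (J s).2 ∩ Ico (J s').1 (J s').2 := inter_subset_inter h1 h2
        _ = ∅ := hpar

lemma W_unique {n : ℕ} {a b : List ℕ} (ha : a.length = n) (hb : b.length = n)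
    {x : ℝ} (hxa : x ∈ W a) (hxb : x ∈ W b) : a = b := by
  by_contra hne
  have := W_disj (ha.trans hb.symm) hne
  exact absurd (mem_inter hxa hxb) (by rw [this]; exact notMem_empty x)

/- ### branch point xq -/

def A (q : ℕ → ℕ) (n : ℕ) : ℝ := lo (restr q (n+1))
def B (q : ℕ → ℕ) (n : ℕ) : ℝ := hi (restr q (n+1))

lemma restr_ne_nil (q : ℕ → ℕ) (n : ℕ) : restr q (n+1) ≠ [] := by
  intro h
  have := restr_length q (n+1)
  rw [h] at this
  simp at this

lemma A_lt_B (q : ℕ → ℕ) (n : ℕ) : A q n < B q n := lo_lt_hi (restr_ne_nil q n)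

lemma A_mono_succ (q : ℕ → ℕ) (n : ℕ) : A q n ≤ A q (n+1) := by
  have := lo_child_le (restr_ne_nil q n) (q (n+1))
  rwa [← restr_succ] at this

lemma B_succ_lt (q : ℕ → ℕ) (n : ℕ) : B q (n+1) < B q n := by
  have := hi_child_lt (restr_ne_nil q n) (q (n+1))
  rwa [← restr_succ] at this

lemma A_mono (q : ℕ → ℕ) : Monotone (A q) :=
  monotone_nat_of_le_succ (A_mono_succ q)

lemma B_anti (q : ℕ → ℕ) : StrictAnti (B q) :=
  strictAnti_nat_of_succ_lt (B_succ_lt q)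

lemma A_lt_B' (q : ℕ → ℕ) (m n : ℕ) : A q m < B q n := by
  rcases le_total m n with h | h
  · exact lt_of_le_of_lt (A_mono q h) (A_lt_B q n)
  · exact lt_of_lt_of_le (A_lt_B q m) (B_anti q |>.antitone h)

lemma AB_width (q : ℕ → ℕ) (n : ℕ) : B q n - A q n ≤ (1/2) ^ n := by
  have := hi_width (restr_ne_nil q n)
  rw [restr_length] at this
  calc B q n - A q n ≤ 2 * (1/2)^(n+1) := this
  _ = (1/2)^n := by ring

def xq (q : ℕ → ℕ) : ℝ := ⨆ n, A q n

lemma A_bdd (q : ℕ → ℕ) : BddAbove (range (A q)) :=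
  ⟨B q 0, by rintro y ⟨m, rfl⟩; exact (A_lt_B' q m 0).le⟩

lemma A_le_xq (q : ℕ → ℕ) (n : ℕ) : A q n ≤ xq q := le_ciSup (A_bdd q) n

lemma xq_lt_B (q : ℕ → ℕ) (n : ℕ) : xq q < B q n := by
  have h1 : xq q ≤ B q (n+1) := ciSup_le fun m => (A_lt_B' q m (n+1)).le
  exact lt_of_le_of_lt h1 (B_succ_lt q n)

lemma xq_mem_W (q : ℕ → ℕ) (n : ℕ) : xq q ∈ W (restr q n) := by
  cases n with
  | zero => simp [restr, W_nil]
  | succ n =>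
    rw [W_ne (restr_ne_nil q n)]
    exact ⟨A_le_xq q n, xq_lt_B q n⟩

lemma xq_mem_fruit (q : ℕ → ℕ) : xq q ∈ fruit W q :=
  mem_iInter.2 (xq_mem_W q)

lemma fruit_W_eq (q : ℕ → ℕ) : fruit W q = {xq q} := by
  apply Subset.antisymm
  · intro y hy
    simp only [fruit, mem_iInter] at hy
    have hy' : ∀ n, A q n ≤ y ∧ y < B q n := by
      intro n
      have := hy (n+1)
      rwa [W_ne (restr_ne_nil q n)] at this
    have h1 : xq q ≤ y := ciSup_le fun n => (hy' n).1
    have h2 : y ≤ xq q := by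
      apply le_of_forall_pos_le_add
      intro ε hε
      obtain ⟨n, hn⟩ := exists_pow_lt_of_lt_one hε (by norm_num : (1:ℝ)/2 < 1)
      have := (hy' n).2
      have h3 := AB_width q n
      have h4 := A_le_xq q n
      have : y < A q n + (1/2)^n := by linarith
      linarith
    simp [le_antisymm h2 h1]
  · rintro y (rfl : y = xq q)
    exact xq_mem_fruit q

lemma xq_sup_lt {q : ℕ → ℕ} {c : ℝ} (h : c < xq q) : ∃ n, c < A q n := by
  have := lt_ciSup_iff (A_bdd q) |>.1 h
  simpa using this

/- ### order -/

lemma xq_lt_xq {q p : ℕ → ℕ} {n : ℕ} (hn : 1 ≤ n) (he : restr q n = restr p n)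
    (hlt : q n < p n) : xq q < xq p := by
  have h1 : xq q < B q n := xq_lt_B q n
  have h2 : A p n ≤ xq p := A_le_xq p n
  have h3 : B q n ≤ A p n := by
    unfold B A
    rw [restr_succ, restr_succ, ← he]
    apply sib_le ?_ hlt
    intro hc
    have := restr_length q n
    rw [hc] at this
    simp at this
    omega
  linarith

lemma tri_trichotomy {p q : ℕ → ℕ} (h : p ≠ q) : tri p q ∨ tri q p := by
  have hne : ∃ n, p n ≠ q n := Function.ne_iff.1 h
  classical
  set n := Nat.find hne with hn
  have h1 : p n ≠ q n := Nat.find_spec hne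
  have h2 : restr p n = restr q n := restr_eq_iff.2 fun i hi => by
    by_contra hc
    exact absurd hi (not_lt.2 (Nat.find_le hc))
  rcases lt_or_gt_of_ne h1 with hlt | hlt
  · exact Or.inl ⟨n, h2, hlt⟩
  · exact Or.inr ⟨n, h2.symm, hlt⟩

/- ### coding -/

def cl (x : ℝ) : (n : ℕ) → {a : List ℕ // a.length = n ∧ x ∈ W a}
  | 0 => ⟨[], rfl, by rw [W_nil]; trivial⟩
  | n+1 =>
    ⟨(cl x n).1 ++ [Classical.choose (W_cover (cl x n).2.2)], by simp [(cl x n).2.1],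
      Classical.choose_spec (W_cover (cl x n).2.2)⟩

def code (x : ℝ) (n : ℕ) : ℕ := ((cl x (n+1)).1).getLastD 0

lemma cl_succ (x : ℝ) (n : ℕ) : (cl x (n+1)).1 = (cl x n).1 ++ [code x n] := by
  show (cl x n).1 ++ [Classical.choose (W_cover (cl x n).2.2)] = _
  congr 1
  show _ = [((cl x (n+1)).1).getLastD 0]
  show _ = [((cl x n).1 ++ [Classical.choose (W_cover (cl x n).2.2)]).getLastD 0]
  simp

lemma restr_code (x : ℝ) (n : ℕ) : restr (code x) n = (cl x n).1 := by
  induction n with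
  | zero => rfl
  | succ n ih => rw [restr_succ, cl_succ, ih]

lemma mem_W_code (x : ℝ) (n : ℕ) : x ∈ W (restr (code x) n) := by
  rw [restr_code]
  exact (cl x n).2.2

lemma code_fruit (x : ℝ) : x ∈ fruit W (code x) := mem_iInter.2 (mem_W_code x)

lemma xq_code (x : ℝ) : xq (code x) = x := by
  have := code_fruit x
  rw [fruit_W_eq] at this
  exact this.symm

lemma code_unique {x : ℝ} {p : ℕ → ℕ} (h : ∀ n, x ∈ W (restr p n)) : code x = p := by
  funext i
  have h1 : restr (code x) (i+1) = restr p (i+1) :=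
    W_unique (restr_length _ _) (restr_length _ _) (mem_W_code x (i+1)) (h (i+1))
  exact restr_eq_iff.1 h1 i (Nat.lt_succ_self i)

lemma code_xq (p : ℕ → ℕ) : code (xq p) = p :=
  code_unique (xq_mem_W p)

lemma mem_fruit_W {x : ℝ} {p : ℕ → ℕ} (h : x ∈ fruit W p) : x = xq p := by
  rw [fruit_W_eq] at h
  exact h

/- key: points of W (restr q m) above xq q are fruits of rsequences -/

lemma code_in_rseq {q : ℕ → ℕ} {m : ℕ} (hm : 1 ≤ m) {w : ℝ}
    (hw1 : w ∈ W (restr q m)) (hw2 : xq q < w) :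
    tri q (code w) ∧ restr q m = restr (code w) m := by
  have hragree : restr q m = restr (code w) m :=
    (W_unique (restr_length _ _) (restr_length _ _) (mem_W_code w m) hw1).symm
  refine ⟨?_, hragree⟩
  have hne : q ≠ code w := by
    intro hc
    have hxw : xq q = w := by rw [hc, xq_code]
    rw [hxw] at hw2
    exact lt_irrefl _ hw2
  rcases tri_trichotomy hne with h | h
  · exact h
  · obtain ⟨n, hn1, hn2⟩ := h
    have hnm : m ≤ n := by
      by_contra hc
      push_neg at hc
      have := restr_eq_iff.1 hragree n hc
      omega
    have hord := xq_lt_xq (le_trans hm hnm) hn1 hn2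
    rw [xq_code] at hord
    linarith

lemma A_def (q : ℕ → ℕ) (n : ℕ) : A q n = lo (restr q (n+1)) := rfl
lemma B_def (q : ℕ → ℕ) (n : ℕ) : B q n = hi (restr q (n+1)) := rfl

set_option linter.unusedSectionVars false

/- ### Forward direction -/

section Forward
variable {Y : Type*} [ty : TopologicalSpace Y] [T2Space Y]
variable {f : ℝ → Y} (hc : @Continuous ℝ Y sorgenfreyTop ty f)
  (ho : @IsOpenMap ℝ Y sorgenfreyTop ty f) (hs : Function.Surjective f)

lemma W_open (a : List ℕ) : IsOpen[sorgenfreyTop] (W a) := by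
  rcases eq_or_ne a [] with rfl | h
  · rw [W_nil]; exact @isOpen_univ ℝ sorgenfreyTop
  · rw [W_ne h]; exact sorg_isOpen_Ico _ _

lemma fxq_mem_fruit (q : ℕ → ℕ) : f (xq q) ∈ fruit (fun a => f '' W a) q :=
  mem_iInter.2 fun n => mem_image_of_mem f (xq_mem_W q n)

include hc in
lemma dichotomy {p : ℕ → ℕ} {y : Y} (hy : y ∈ fruit (fun a => f '' W a) p) :
    y = f (xq p) ∨ ∀ n, ∃ z ∈ Ico (A p n) (xq p), f z = y := by
  by_cases hall : ∀ n, ∃ z ∈ Ico (A p n) (xq p), f z = y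
  · exact Or.inr hall
  left
  push_neg at hall
  obtain ⟨n₀, hn₀⟩ := hall
  by_contra hne
  obtain ⟨O, O', hO, hO', hyO, hfO', hdisj⟩ := t2_separation hne
  have hpre : f ⁻¹' O' ∈ @nhds ℝ sorgenfreyTop (xq p) := by
    have hop : IsOpen[sorgenfreyTop] (f ⁻¹' O') := (continuous_def.mp hc) O' hO'
    exact sorg_open_mem_nhds hop hfO'
  obtain ⟨b, hb, hIb⟩ := sorg_mem_nhds.1 hpre
  obtain ⟨n₁, hn₁⟩ := exists_pow_lt_of_lt_one (sub_pos.2 hb) (by norm_num : (1:ℝ)/2 < 1)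
  set n := max n₀ n₁ with hndef
  have hBb : B p n < b := by
    have h1 : B p n - A p n ≤ (1/2)^n := AB_width p n
    have h2 : A p n ≤ xq p := A_le_xq p n
    have h3 : (1/2:ℝ)^n ≤ (1/2)^n₁ :=
      pow_le_pow_of_le_one (by norm_num) (by norm_num) (le_max_right n₀ n₁)
    linarith
  have hyW : y ∈ f '' W (restr p (n+1)) := mem_iInter.1 hy (n+1)
  obtain ⟨z, hz, rfl⟩ := hyW
  rw [W_ne (restr_ne_nil p n), ← A_def, ← B_def] at hz
  rcases lt_or_ge z (xq p) with hzx | hzx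
  · exact hn₀ z ⟨le_trans (A_mono p (le_max_left n₀ n₁)) hz.1, hzx⟩ rfl
  · have : z ∈ Ico (xq p) b := ⟨hzx, lt_trans hz.2 hBb⟩
    have : f z ∈ O' := hIb this
    exact absurd (mem_inter hyO this) (by rw [Set.disjoint_iff_inter_eq_empty.1 hdisj]; exact notMem_empty _)

include hc in
lemma fruit_sub {p : ℕ → ℕ} {y : Y} (hy : y ∈ fruit (fun a => f '' W a) p)
    {S : Set ℝ} (hxS : xq p ∈ S) (hIS : ∃ n, Ico (A p n) (xq p) ⊆ S) :
    y ∈ f '' S := by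
  rcases dichotomy hc hy with rfl | hall
  · exact mem_image_of_mem f hxS
  · obtain ⟨n, hn⟩ := hIS
    obtain ⟨z, hz, hfz⟩ := hall n
    exact ⟨z, hn hz, hfz⟩

include hc in
lemma fruit_sub_rseq {q p : ℕ → ℕ} {m : ℕ} (hm : 1 ≤ m) (hp : p ∈ rsequences q m)
    {y : Y} (hy : y ∈ fruit (fun a => f '' W a) p) :
    y ∈ f '' Ioo (xq q) (hi (restr q m)) := by
  obtain ⟨⟨n, hn1, hn2⟩, hagree⟩ := hp
  have hnm : m ≤ n := by
    by_contra hcon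
    push_neg at hcon
    have := restr_eq_iff.1 hagree n hcon
    omega
  have hqp : xq q < xq p := xq_lt_xq (le_trans hm hnm) hn1 hn2
  have hplt : xq p < hi (restr q m) := by
    obtain ⟨m', rfl⟩ := Nat.exists_eq_add_of_le hm
    have h1 : xq p ∈ W (restr p (1 + m')) := xq_mem_W p (1+m')
    rw [← hagree, W_ne (by rw [Nat.add_comm] at *; exact restr_ne_nil q m')] at h1
    exact h1.2
  apply fruit_sub hc hy
  · exact ⟨hqp, hplt⟩
  · obtain ⟨n', hn'⟩ := xq_sup_lt hqp
    exact ⟨n', fun z hz => ⟨lt_of_lt_of_le hn' hz.1, lt_trans hz.2 hplt⟩⟩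

include hc in
lemma cut_pos {q : ℕ → ℕ} {m : ℕ} (hm : 1 ≤ m) :
    cut (fun a => f '' W a) q m ∪ {f (xq q)} = f '' Ico (xq q) (hi (restr q m)) := by
  obtain ⟨m', rfl⟩ := Nat.exists_eq_add_of_le hm
  rw [Nat.add_comm 1 m'] at *
  apply Subset.antisymm
  · rintro y (hy | rfl)
    · simp only [cut, mem_iUnion] at hy
      obtain ⟨p, hp, hyp⟩ := hy
      have := fruit_sub_rseq hc (by omega) hp hyp
      exact image_mono (f := f) Ioo_subset_Ico_self this
    · exact mem_image_of_mem f ⟨le_refl _, by rw [← B_def]; exact xq_lt_B q m'⟩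
  · rintro _ ⟨w, hw, rfl⟩
    rcases eq_or_lt_of_le hw.1 with rfl | hlt
    · exact Or.inr rfl
    · left
      have hwW : w ∈ W (restr q (m'+1)) := by
        rw [W_ne (restr_ne_nil q m')]
        refine ⟨?_, hw.2⟩
        have h1 : lo (restr q (m'+1)) ≤ xq q := by
          have := xq_mem_W q (m'+1)
          rw [W_ne (restr_ne_nil q m')] at this
          exact this.1
        linarith
      obtain ⟨ht, hr⟩ := code_in_rseq (by omega) hwW hlt
      simp only [cut, mem_iUnion]
      exact ⟨code w, ⟨ht, hr⟩, mem_iInter.2 fun n => mem_image_of_mem f (mem_W_code w n)⟩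

def S0 (q : ℕ → ℕ) : Set ℝ :=
  Ico (xq q) (hi (restr q 1)) ∪ ⋃ k : ℕ, ⋃ (_ : q 0 < k), W [k]

lemma S0_open (q : ℕ → ℕ) : IsOpen[sorgenfreyTop] (S0 q) := by
  letI := sorgenfreyTop
  apply IsOpen.union (sorg_isOpen_Ico _ _)
  exact isOpen_iUnion fun k => isOpen_iUnion fun _ => W_open [k]

lemma restr_one (p : ℕ → ℕ) : restr p 1 = [p 0] := by
  rw [show (1:ℕ) = 0 + 1 from rfl, restr_succ]
  simp [restr]

include hc in
lemma cut_zero (q : ℕ → ℕ) :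
    cut (fun a => f '' W a) q 0 ∪ {f (xq q)} = f '' S0 q := by
  apply Subset.antisymm
  · rintro y (hy | rfl)
    · simp only [cut, mem_iUnion] at hy
      obtain ⟨p, hp, hyp⟩ := hy
      obtain ⟨⟨n, hn1, hn2⟩, -⟩ := hp
      rcases Nat.eq_zero_or_pos n with rfl | hn
      · -- q 0 < p 0 : fruit ⊆ f '' W [p 0]
        have hmem : y ∈ f '' W [p 0] := by
          apply fruit_sub hc hyp
          · have := xq_mem_W p 1
            rwa [restr_one] at this
          · refine ⟨0, fun z hz => ?_⟩
            have h1 : W (restr p 1) = Ico (A p 0) (B p 0) := by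
              rw [W_ne (restr_ne_nil p 0), ← A_def, ← B_def]
            rw [← restr_one p, h1]
            exact ⟨hz.1, lt_trans hz.2 (xq_lt_B p 0)⟩
        apply image_mono (f := f) ?_ hmem
        intro z hz
        exact Or.inr (mem_iUnion.2 ⟨p 0, mem_iUnion.2 ⟨hn2, hz⟩⟩)
      · -- p ∈ rsequences q 1
        have hp1 : p ∈ rsequences q 1 := by
          refine ⟨⟨n, hn1, hn2⟩, ?_⟩
          exact restr_prefix_eq hn hn1
        have := fruit_sub_rseq hc (le_refl 1) hp1 hyp
        exact image_mono (f := f) (Ioo_subset_Ico_self.trans subset_union_left) this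
    · exact mem_image_of_mem f (Or.inl ⟨le_refl _, by rw [show restr q 1 = restr q (0+1) from rfl, ← B_def]; exact xq_lt_B q 0⟩)
  · rintro _ ⟨w, hw, rfl⟩
    rcases hw with hw | hw
    · rcases eq_or_lt_of_le hw.1 with rfl | hlt
      · exact Or.inr rfl
      · left
        have hwW : w ∈ W (restr q 1) := by
          rw [W_ne (restr_ne_nil q 0)]
          refine ⟨?_, hw.2⟩
          have h1 := xq_mem_W q 1
          rw [W_ne (restr_ne_nil q 0)] at h1
          linarith [h1.1]
        obtain ⟨ht, -⟩ := code_in_rseq (le_refl 1) hwW hlt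
        simp only [cut, mem_iUnion]
        exact ⟨code w, ⟨ht, rfl⟩, mem_iInter.2 fun n => mem_image_of_mem f (mem_W_code w n)⟩
    · simp only [mem_iUnion] at hw
      obtain ⟨k, hk, hwk⟩ := hw
      left
      have hcode1 : restr (code w) 1 = [k] :=
        W_unique (restr_length _ _) (by simp) (mem_W_code w 1) hwk
      have hc0 : code w 0 = k := by
        have := restr_one (code w)
        rw [this] at hcode1
        simpa using hcode1
      have htri : tri q (code w) := ⟨0, by rfl, by omega⟩
      simp only [cut, mem_iUnion]
      exact ⟨code w, ⟨htri, rfl⟩, mem_iInter.2 fun n => mem_image_of_mem f (mem_W_code w n)⟩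

include hc ho in
lemma base_branch_xq (q : ℕ → ℕ) : q ∈ BB ty (fun a => f '' W a) (f (xq q)) := by
  have hopen : ∀ m : ℕ, IsOpen[ty] (cut (fun a => f '' W a) q m ∪ {f (xq q)}) := by
    intro m
    rcases Nat.eq_zero_or_pos m with rfl | hm
    · rw [cut_zero hc]
      exact ho _ (S0_open q)
    · rw [cut_pos hc hm]
      exact ho _ (sorg_isOpen_Ico _ _)
  refine ⟨fxq_mem_fruit q, hopen, ?_⟩
  constructor
  intro t
  constructor
  · intro ht
    have hpre : f ⁻¹' t ∈ @nhds ℝ sorgenfreyTop (xq q) := (@Continuous.tendsto ℝ Y sorgenfreyTop ty f hc (xq q)) ht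
    obtain ⟨b, hb, hIb⟩ := sorg_mem_nhds.1 hpre
    obtain ⟨n₁, hn₁⟩ := exists_pow_lt_of_lt_one (sub_pos.2 hb) (by norm_num : (1:ℝ)/2 < 1)
    refine ⟨n₁ + 1, trivial, ?_⟩
    rw [cut_pos hc (by omega)]
    have hsub : Ico (xq q) (hi (restr q (n₁+1))) ⊆ Ico (xq q) b := by
      apply Ico_subset_Ico_right
      rw [← B_def]
      have h1 := AB_width q n₁
      have h2 := A_le_xq q n₁
      linarith
    calc f '' Ico (xq q) (hi (restr q (n₁+1))) ⊆ f '' Ico (xq q) b := image_mono (f := f) hsub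
    _ ⊆ f '' (f ⁻¹' t) := image_mono (f := f) hIb
    _ ⊆ t := image_preimage_subset f t
  · rintro ⟨m, -, hsub⟩
    apply mem_of_superset ?_ hsub
    exact (hopen m).mem_nhds (Or.inr rfl)

include hc ho hs in
lemma forward_base : IsSorgenfreyBase ty (fun a => f '' W a) := by
  refine ⟨?_, ?_, ⟨?_, ?_⟩, ?_, ?_⟩
  · exact fun a => ho _ (W_open a)
  · exact fun q => ⟨f (xq q), fxq_mem_fruit q⟩
  · show f '' W [] = univ
    rw [W_nil, image_univ, Set.range_eq_univ.2 hs]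
  · intro a
    show f '' W a = ⋃ n : ℕ, f '' W (a ++ [n])
    rw [W_covering a, image_iUnion]
  · intro x q hq n
    rcases dichotomy hc hq with rfl | hall
    · exact ⟨q, base_branch_xq hc ho q, rfl⟩
    · obtain ⟨z, hz, hfz⟩ := hall n
      refine ⟨code z, ?_, ?_⟩
      · have := base_branch_xq hc ho (code z)
        rwa [xq_code, hfz] at this
      · have hzW : z ∈ W (restr q (n+1)) := by
          rw [W_ne (restr_ne_nil q n), ← A_def, ← B_def]
          exact ⟨hz.1, lt_trans hz.2 (xq_lt_B q n)⟩
        have h1 : restr (code z) (n+1) = restr q (n+1) :=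
          W_unique (restr_length _ _) (restr_length _ _) (mem_W_code z (n+1)) hzW
        exact restr_prefix_eq (Nat.le_succ n) h1
  · exact fun q => ⟨f (xq q), base_branch_xq hc ho q⟩

end Forward

/- ### Backward direction -/

section Backward
variable {Y : Type*} [ty : TopologicalSpace Y] [T2Space Y]
variable {V : List ℕ → Set Y} (hV : IsSorgenfreyBase ty V)

lemma cut_mono {X : Type*} (V : List ℕ → Set X) (q : ℕ → ℕ) {m m' : ℕ} (h : m ≤ m') :
    cut V q m' ⊆ cut V q m := by
  intro y hy
  simp only [cut, mem_iUnion] at hy ⊢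
  obtain ⟨p, ⟨ht, hr⟩, hyp⟩ := hy
  exact ⟨p, ⟨ht, restr_prefix_eq h hr⟩, hyp⟩

def bump (q : ℕ → ℕ) (M : ℕ) : ℕ → ℕ := fun i => if i = M then q i + 1 else q i

lemma bump_mem (q : ℕ → ℕ) (M : ℕ) : bump q M ∈ rsequences q M := by
  constructor
  · refine ⟨M, ?_, by simp [bump]⟩
    apply restr_eq_iff.2
    intro i hi
    simp [bump, Nat.ne_of_lt hi]
  · apply restr_eq_iff.2
    intro i hi
    simp [bump, Nat.ne_of_lt hi]

include hV in
lemma cut_nonempty (q : ℕ → ℕ) (m : ℕ) : (cut V q m).Nonempty := by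
  obtain ⟨y, hy⟩ := hV.2.1 (bump q m)
  exact ⟨y, by simp only [cut, mem_iUnion]; exact ⟨bump q m, bump_mem q m, hy⟩⟩

include hV in
lemma BB_unique {q : ℕ → ℕ} {z z' : Y} (h1 : q ∈ BB ty V z) (h2 : q ∈ BB ty V z') :
    z = z' := by
  by_contra hne
  obtain ⟨U, U', hU, hU', hzU, hzU', hdisj⟩ := t2_separation hne
  obtain ⟨m, -, hm⟩ := h1.2.2.mem_iff.1 (hU.mem_nhds hzU)
  obtain ⟨m', -, hm'⟩ := h2.2.2.mem_iff.1 (hU'.mem_nhds hzU')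
  obtain ⟨y, hy⟩ := cut_nonempty hV q (max m m')
  have hy1 : y ∈ U := hm (Or.inl (cut_mono V q (le_max_left m m') hy))
  have hy2 : y ∈ U' := hm' (Or.inl (cut_mono V q (le_max_right m m') hy))
  exact absurd (mem_inter hy1 hy2)
    (by rw [Set.disjoint_iff_inter_eq_empty.1 hdisj]; exact notMem_empty _)

def zOf (hV : IsSorgenfreyBase ty V) (q : ℕ → ℕ) : Y := Classical.choose (hV.2.2.2.2 q)

lemma zOf_spec (q : ℕ → ℕ) : q ∈ BB ty V (zOf hV q) := Classical.choose_spec (hV.2.2.2.2 q)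

def fY (hV : IsSorgenfreyBase ty V) : ℝ → Y := fun x => zOf hV (code x)

lemma fY_xq (t : ℕ → ℕ) : fY hV (xq t) = zOf hV t := by
  unfold fY
  rw [code_xq]

include hV in
lemma image_Ico_eq (q : ℕ → ℕ) (m : ℕ) :
    fY hV '' Ico (xq q) (B q m) = cut V q (m+1) ∪ {zOf hV q} := by
  apply Subset.antisymm
  · rintro _ ⟨w, hw, rfl⟩
    rcases eq_or_lt_of_le hw.1 with rfl | hlt
    · right
      show fY hV (xq q) ∈ {zOf hV q}
      rw [fY_xq]
      rfl
    · left
      have hwW : w ∈ W (restr q (m+1)) := by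
        rw [W_ne (restr_ne_nil q m), ← A_def, ← B_def]
        have h1 : A q m ≤ xq q := A_le_xq q m
        exact ⟨by linarith, hw.2⟩
      obtain ⟨ht, hr⟩ := code_in_rseq (by omega) hwW hlt
      simp only [cut, mem_iUnion]
      exact ⟨code w, ⟨ht, hr⟩, (zOf_spec hV (code w)).1⟩
  · rintro y (hy | rfl)
    · simp only [cut, mem_iUnion] at hy
      obtain ⟨p, ⟨⟨n, hn1, hn2⟩, hagree⟩, hyp⟩ := hy
      have hnm : m + 1 ≤ n := by
        by_contra hcon
        push_neg at hcon
        have := restr_eq_iff.1 hagree n hcon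
        omega
      obtain ⟨t, htBB, htr⟩ := hV.2.2.2.1 y p hyp (n+1)
      have htp : ∀ i < n + 1, t i = p i := restr_eq_iff.1 htr
      have htrn : restr q n = restr t n := by
        rw [hn1]
        apply restr_eq_iff.2
        intro i hi
        exact (htp i (by omega)).symm
      have htri : xq q < xq t := by
        apply xq_lt_xq (by omega) htrn
        rw [htp n (by omega)]
        exact hn2
      have htlt : xq t < B q m := by
        have h1 : xq t ∈ W (restr t (m+1)) := xq_mem_W t (m+1)
        have h2 : restr t (m+1) = restr q (m+1) := by
          have h3 : restr t (m+1) = restr p (m+1) :=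
            restr_eq_iff.2 fun i hi => htp i (by omega)
          rw [h3, ← hagree]
        rw [h2, W_ne (restr_ne_nil q m), ← A_def, ← B_def] at h1
        exact h1.2
      have hyz : y = zOf hV t := BB_unique hV htBB (zOf_spec hV t)
      exact ⟨xq t, ⟨htri.le, htlt⟩, by rw [fY_xq, ← hyz]⟩
    · exact ⟨xq q, ⟨le_refl _, xq_lt_B q m⟩, fY_xq hV q⟩

include hV in
lemma fY_surj : Function.Surjective (fY hV) := by
  intro y
  -- build a branch of V through y
  have hstep : ∀ a : List ℕ, y ∈ V a → ∃ k, y ∈ V (a ++ [k]) := by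
    intro a ha
    have := hV.2.2.1.2 a
    rw [this] at ha
    exact mem_iUnion.1 ha
  classical
  let F : (n : ℕ) → {a : List ℕ // a.length = n ∧ y ∈ V a} := fun n =>
    Nat.rec ⟨[], rfl, by rw [hV.2.2.1.1]; trivial⟩
      (fun _ ih => ⟨ih.1 ++ [Classical.choose (hstep ih.1 ih.2.2)], by simp [ih.2.1],
        Classical.choose_spec (hstep ih.1 ih.2.2)⟩) n
  let q : ℕ → ℕ := fun n => (F (n+1)).1.getLastD 0
  have hFsucc : ∀ n, (F (n+1)).1 = (F n).1 ++ [q n] := by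
    intro n
    show (F n).1 ++ [Classical.choose (hstep (F n).1 (F n).2.2)] = _
    congr 1
    show _ = [((F n).1 ++ [Classical.choose (hstep (F n).1 (F n).2.2)]).getLastD 0]
    simp
  have hrestr : ∀ n, restr q n = (F n).1 := by
    intro n
    induction n with
    | zero => rfl
    | succ n ih => rw [restr_succ, hFsucc, ih]
  have hbr : y ∈ fruit V q := mem_iInter.2 fun n => by rw [hrestr]; exact (F n).2.2
  obtain ⟨t, htBB, -⟩ := hV.2.2.2.1 y q hbr 0
  exact ⟨xq t, by rw [fY_xq, ← BB_unique hV htBB (zOf_spec hV t)]⟩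

include hV in
lemma fY_cont : @Continuous ℝ Y sorgenfreyTop ty (fY hV) := by
  apply (@continuous_def ℝ Y sorgenfreyTop ty (fY hV)).2
  intro t htop
  apply sorg_isOpen_iff.2
  intro x hx
  have ht : t ∈ @nhds Y ty (fY hV x) := htop.mem_nhds hx
  have hfx : fY hV x = zOf hV (code x) := rfl
  rw [hfx] at ht
  obtain ⟨m, -, hm⟩ := (zOf_spec hV (code x)).2.2.mem_iff.1 ht
  refine ⟨B (code x) m, ?_, ?_⟩
  · conv_lhs => rw [← xq_code x]
    exact xq_lt_B (code x) m
  · intro w hw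
    have hw' : w ∈ Ico (xq (code x)) (B (code x) m) := by rwa [xq_code]
    have : fY hV w ∈ fY hV '' Ico (xq (code x)) (B (code x) m) := mem_image_of_mem _ hw'
    rw [image_Ico_eq hV] at this
    rcases this with h | h
    · exact hm (Or.inl (cut_mono V (code x) (Nat.le_succ m) h))
    · exact hm (Or.inr h)

include hV in
lemma fY_open : @IsOpenMap ℝ Y sorgenfreyTop ty (fY hV) := by
  intro U hU
  rw [isOpen_iff_mem_nhds]
  rintro _ ⟨x, hxU, rfl⟩
  obtain ⟨b, hb, hIb⟩ := sorg_mem_nhds.1 (sorg_open_mem_nhds hU hxU)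
  obtain ⟨m, hm⟩ := exists_pow_lt_of_lt_one (sub_pos.2 hb) (by norm_num : (1:ℝ)/2 < 1)
  have hBb : B (code x) m < b := by
    have h1 := AB_width (code x) m
    have h2 := A_le_xq (code x) m
    rw [xq_code] at h2
    linarith
  have hsub : Ico x (B (code x) m) ⊆ U := by
    apply subset_trans ?_ hIb
    exact Ico_subset_Ico_right hBb.le
  have heq : fY hV '' Ico x (B (code x) m) = cut V (code x) (m+1) ∪ {zOf hV (code x)} := by
    have h0 := image_Ico_eq hV (code x) m
    rwa [xq_code] at h0
  apply mem_of_superset ?_ (image_mono hsub)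
  rw [heq]
  apply IsOpen.mem_nhds ((zOf_spec hV (code x)).2.1 (m+1))
  exact Or.inr rfl

end Backward

/-- A Hausdorff space is a continuous open image of the Sorgenfrey line iff
it has a Sorgenfrey base. -/
theorem stmt0 {Y : Type*} (τ : TopologicalSpace Y) (hT2 : @T2Space Y τ) :
    (∃ f : ℝ → Y, @Continuous ℝ Y sorgenfreyTop τ f ∧ @IsOpenMap ℝ Y sorgenfreyTop τ f ∧
      Function.Surjective f) ↔
    ∃ V : List ℕ → Set Y, IsSorgenfreyBase τ V := by
  letI := τ
  haveI := hT2
  constructor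
  · rintro ⟨f, hc, ho, hs⟩
    exact ⟨fun a => f '' W a, forward_base hc ho hs⟩
  · rintro ⟨V, hV⟩
    exact ⟨fY hV, fY_cont hV, fY_open hV, fY_surj hV⟩
end
end

section
/- The Sorgenfrey line 𝕊 is homeomorphic to the space (ℕ → ℕ, σ_𝕊). -/
open Set Filter Topology TopologicalSpace Function

noncomputable section

namespace St6
noncomputable section
open Classical

/-! ### restr lemmas -/

lemma restr_zero (q : ℕ → ℕ) : restr q 0 = [] := by simp [restr]

lemma restr_succ (q : ℕ → ℕ) (n : ℕ) : restr q (n+1) = restr q n ++ [q n] := by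
  simp [restr, List.range_succ]

lemma restr_length (q : ℕ → ℕ) (n : ℕ) : (restr q n).length = n := by simp [restr]

lemma restr_eq_iff {q p : ℕ → ℕ} {n : ℕ} :
    restr q n = restr p n ↔ ∀ k < n, q k = p k := by
  induction n with
  | zero => simp [restr_zero]
  | succ n ih =>
    rw [restr_succ, restr_succ]
    constructor
    · intro h k hk
      have h2 := List.append_inj h (by simp [restr_length])
      rcases Nat.lt_succ_iff_lt_or_eq.1 hk with hk | hk
      · exact ih.1 h2.1 k hk
      · subst hk; simpa using h2.2
    · intro h
      rw [ih.2 (fun k hk => h k (hk.trans (Nat.lt_succ_self n))), h n (Nat.lt_succ_self n)]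

lemma restr_prefix (q : ℕ → ℕ) {m n : ℕ} (h : m ≤ n) : restr q m <+: restr q n := by
  induction n with
  | zero => simpa [Nat.le_zero.1 h] using List.prefix_refl _
  | succ n ih =>
    rcases Nat.lt_succ_iff_lt_or_eq.1 (Nat.lt_succ_of_le h) with h2 | h2
    · exact (ih (Nat.lt_succ_iff.1 h2)).trans
        (by rw [restr_succ]; exact (List.prefix_append _ _))
    · subst h2; exact List.prefix_refl _
  

/-! ### The interval scheme -/

abbrev half : ℝ := 2⁻¹

lemma half_pos : (0:ℝ) < half := by norm_num
lemma half_lt_one : (half:ℝ) < 1 := by norm_num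
lemma hpow_pos (d : ℕ) : (0:ℝ) < half ^ d := pow_pos half_pos d
lemma hpow_le_one (d : ℕ) : (half:ℝ) ^ d ≤ 1 :=
  pow_le_one₀ (le_of_lt half_pos) (le_of_lt half_lt_one)

def step (p : ℝ × ℝ) (d : ℕ) : ℝ × ℝ := (p.1 + p.2 * (1 - half ^ d), p.2 * half ^ (d+1))

def uv (a : List ℕ) : ℝ × ℝ := a.foldl step (0, 1)

def u (a : List ℕ) : ℝ := (uv a).1
def len (a : List ℕ) : ℝ := (uv a).2

lemma uv_nil : uv ([] : List ℕ) = (0, 1) := rfl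
lemma u_nil : u ([] : List ℕ) = 0 := rfl
lemma len_nil : len ([] : List ℕ) = 1 := rfl

lemma uv_append (a : List ℕ) (d : ℕ) : uv (a ++ [d]) = step (uv a) d := by
  simp [uv, List.foldl_append]

lemma u_append (a : List ℕ) (d : ℕ) : u (a ++ [d]) = u a + len a * (1 - half ^ d) := by
  simp [u, len, uv_append, step]

lemma len_append (a : List ℕ) (d : ℕ) : len (a ++ [d]) = len a * half ^ (d+1) := by
  simp [len, uv_append, step]

lemma len_pos (a : List ℕ) : 0 < len a := by
  induction a using List.reverseRecOn with
  | nil => norm_num [len_nil]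
  | append_singleton a d ih => rw [len_append]; exact mul_pos ih (hpow_pos _)

lemma len_le (a : List ℕ) : len a ≤ half ^ a.length := by
  induction a using List.reverseRecOn with
  | nil => simp [len_nil]
  | append_singleton a d ih =>
    rw [len_append]
    calc len a * half ^ (d+1) ≤ half ^ a.length * half ^ 1 := by
          apply mul_le_mul ih (pow_le_pow_of_le_one (le_of_lt half_pos)
            (le_of_lt half_lt_one) (by omega)) (le_of_lt (hpow_pos _)) (le_of_lt (hpow_pos _))
      _ = half ^ (a ++ [d]).length := by rw [← pow_add]; simp
    
lemma endpoint_eq (a : List ℕ) (d : ℕ) :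
    u (a ++ [d]) + len (a ++ [d]) = u a + len a * (1 - half ^ (d+1)) := by
  rw [u_append, len_append]
  have h : half ^ (d+1) = half ^ d * half := pow_succ half d
  linear_combination (len a) * h

lemma u_append_ge (a : List ℕ) (d : ℕ) : u a ≤ u (a ++ [d]) := by
  rw [u_append]
  have := len_pos a
  have h1 := hpow_le_one d
  nlinarith

lemma endpoint_append_le (a : List ℕ) (d : ℕ) :
    u (a ++ [d]) + len (a ++ [d]) ≤ u a + len a := by
  rw [endpoint_eq]
  have := len_pos a
  have := hpow_pos (d+1)
  nlinarith

lemma disjoint_step (a : List ℕ) {d d' : ℕ} (h : d < d') :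
    u (a ++ [d]) + len (a ++ [d]) ≤ u (a ++ [d']) := by
  rw [endpoint_eq, u_append]
  have hp : (half:ℝ) ^ d' ≤ half ^ (d+1) :=
    pow_le_pow_of_le_one (le_of_lt half_pos) (le_of_lt half_lt_one) (by omega)
  have := len_pos a
  nlinarith

lemma nest {a b : List ℕ} (h : a <+: b) :
    u a ≤ u b ∧ u b + len b ≤ u a + len a := by
  obtain ⟨l, rfl⟩ := h
  induction l generalizing a with
  | nil => simp
  | cons d l ih =>
    have h1 : a ++ d :: l = (a ++ [d]) ++ l := by simp
    rw [h1]
    obtain ⟨ih1, ih2⟩ := @ih (a ++ [d])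
    exact ⟨(u_append_ge a d).trans ih1, ih2.trans (endpoint_append_le a d)⟩

/-! ### f0 -/

def f0 (q : ℕ → ℕ) : ℝ := ⨆ n, u (restr q n)

lemma u_restr_le_one (q : ℕ → ℕ) (n : ℕ) : u (restr q n) ≤ 1 := by
  have h := nest (restr_prefix q (Nat.zero_le n))
  rw [restr_zero, u_nil, len_nil] at h
  have := len_pos (restr q n)
  linarith [h.2]

lemma f0_bdd (q : ℕ → ℕ) : BddAbove (Set.range fun n => u (restr q n)) :=
  ⟨1, by rintro x ⟨n, rfl⟩; exact u_restr_le_one q n⟩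

lemma f0_lb (q : ℕ → ℕ) (n : ℕ) : u (restr q n) ≤ f0 q := le_ciSup (f0_bdd q) n

lemma f0_ub (q : ℕ → ℕ) (n : ℕ) : f0 q < u (restr q n) + len (restr q n) := by
  have key : f0 q ≤ u (restr q (n+1)) + len (restr q (n+1)) := by
    apply ciSup_le
    intro m
    rcases le_total m (n+1) with h | h
    · have h2 := (nest (restr_prefix q h)).1
      have := len_pos (restr q (n+1))
      linarith
    · have h2 := (nest (restr_prefix q h)).2
      have := len_pos (restr q m)
      linarith
  have h3 : u (restr q (n+1)) + len (restr q (n+1))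
      = u (restr q n) + len (restr q n) * (1 - half ^ (q n + 1)) := by
    rw [restr_succ]; exact endpoint_eq _ _
  have := len_pos (restr q n)
  have := hpow_pos (q n + 1)
  nlinarith

lemma f0_nonneg (q : ℕ → ℕ) : 0 ≤ f0 q := by
  have := f0_lb q 0; rwa [restr_zero, u_nil] at this

lemma f0_lt_one (q : ℕ → ℕ) : f0 q < 1 := by
  have := f0_ub q 0; rwa [restr_zero, u_nil, len_nil, zero_add] at this

lemma f0_strict_mono {q p : ℕ → ℕ} (h : tri q p) : f0 q < f0 p := by
  obtain ⟨n, hr, hn⟩ := h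
  have h1 : f0 q < u (restr q (n+1)) + len (restr q (n+1)) := f0_ub q (n+1)
  have h2 : u (restr q (n+1)) + len (restr q (n+1)) ≤ u (restr p (n+1)) := by
    rw [restr_succ, restr_succ, hr]
    exact disjoint_step _ hn
  exact h1.trans_le (h2.trans (f0_lb p (n+1)))

lemma lex_tricho {q p : ℕ → ℕ} (h : q ≠ p) : tri q p ∨ tri p q := by
  have hex : ∃ n, q n ≠ p n := by
    by_contra hc
    push_neg at hc
    exact h (funext hc)
  classical
  let n := Nat.find hex
  have hne : q n ≠ p n := Nat.find_spec hex
  have hr : restr q n = restr p n := restr_eq_iff.2 fun k hk => by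
    by_contra hc; exact absurd (Nat.find_min hex hk) (by simpa using hc)
  rcases Nat.lt_or_ge (q n) (p n) with h2 | h2
  · exact Or.inl ⟨n, hr, h2⟩
  · exact Or.inr ⟨n, hr.symm, lt_of_le_of_ne h2 (Ne.symm hne)⟩

lemma f0_mono {q p : ℕ → ℕ} (h : trieq q p) : f0 q ≤ f0 p := by
  rcases h with h | rfl
  · exact (f0_strict_mono h).le
  · exact le_rfl

lemma trieq_of_f0_le {q p : ℕ → ℕ} (h : f0 q ≤ f0 p) : trieq q p := by
  by_cases he : q = p
  · exact Or.inr he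
  rcases lex_tricho he with h2 | h2
  · exact Or.inl h2
  · exact absurd (f0_strict_mono h2) (not_lt.2 h)

lemma f0_inj : Function.Injective f0 := by
  intro q p h
  by_contra he
  rcases lex_tricho he with h2 | h2
  · exact absurd (f0_strict_mono h2) (by rw [h]; exact lt_irrefl _)
  · exact absurd (f0_strict_mono h2) (by rw [h]; exact lt_irrefl _)

/-- Location lemma -/
lemma loc {s t : ℕ → ℕ} {m : ℕ}
    (h1 : u (restr t m) ≤ f0 s) (h2 : f0 s < u (restr t m) + len (restr t m)) :
    restr s m = restr t m := by
  by_contra hc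
  have hex : ∃ j, j < m ∧ s j ≠ t j := by
    by_contra h
    push_neg at h
    exact hc (restr_eq_iff.2 fun k hk => h k hk)
  have hex' : ∃ j, j < m ∧ s j ≠ t j := hex
  classical
  obtain ⟨j, hjm, hjne⟩ := hex
  -- take least such j
  let j0 := Nat.find hex'
  obtain ⟨hj0m, hj0ne⟩ : j0 < m ∧ s j0 ≠ t j0 := Nat.find_spec hex'
  have hpre : restr s j0 = restr t j0 := restr_eq_iff.2 fun k hk => by
    by_contra hk2
    exact Nat.find_min hex' hk ⟨hk.trans hj0m, by simpa using hk2⟩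
  -- f0 s in its own interval at level j0+1
  have hs1 : u (restr s (j0+1)) ≤ f0 s := f0_lb s (j0+1)
  have hs2 : f0 s < u (restr s (j0+1)) + len (restr s (j0+1)) := f0_ub s (j0+1)
  -- f0 s in t's interval at level j0+1 by nesting
  have hnest := nest (restr_prefix t (Nat.succ_le_of_lt hj0m))
  have ht1 : u (restr t (j0+1)) ≤ f0 s := le_trans hnest.1 h1
  have ht2 : f0 s < u (restr t (j0+1)) + len (restr t (j0+1)) := lt_of_lt_of_le h2 hnest.2
  rw [restr_succ] at hs1 hs2
  rw [restr_succ, ← hpre] at ht1 ht2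
  rcases Nat.lt_or_ge (s j0) (t j0) with hlt | hge
  · have := disjoint_step (restr s j0) hlt
    linarith
  · have hlt : t j0 < s j0 := lt_of_le_of_ne hge (Ne.symm hj0ne)
    have := disjoint_step (restr s j0) hlt
    linarith

/-! ### Surjectivity of f0 onto [0,1) -/

def dig (a : List ℕ) (x : ℝ) : ℕ := sInf {d | x < u a + len a * (1 - half ^ (d+1))}

lemma dig_set_nonempty (a : List ℕ) {x : ℝ} (h1 : x < u a + len a) :
    {d | x < u a + len a * (1 - half ^ (d+1))}.Nonempty := by
  have hl := len_pos a
  have hpos : 0 < (u a + len a - x) / len a := div_pos (by linarith) hl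
  obtain ⟨n, hn⟩ := exists_pow_lt_of_lt_one hpos half_lt_one
  refine ⟨n, ?_⟩
  have h2 : (half:ℝ)^(n+1) < (u a + len a - x)/len a :=
    lt_of_le_of_lt (pow_le_pow_of_le_one half_pos.le half_lt_one.le (by omega)) hn
  rw [lt_div_iff₀ hl] at h2
  simp only [Set.mem_setOf_eq]
  nlinarith

lemma dig_spec (a : List ℕ) {x : ℝ} (h0 : u a ≤ x) (h1 : x < u a + len a) :
    u (a ++ [dig a x]) ≤ x ∧ x < u (a ++ [dig a x]) + len (a ++ [dig a x]) := by
  have hmem : x < u a + len a * (1 - half ^ (dig a x + 1)) :=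
    Nat.sInf_mem (dig_set_nonempty a h1)
  constructor
  · rw [u_append]
    rcases Nat.eq_zero_or_pos (dig a x) with h | h
    · rw [h]; simpa using h0
    · obtain ⟨k, hk⟩ : ∃ k, dig a x = k + 1 := ⟨dig a x - 1, by omega⟩
      have hnot : ¬ (x < u a + len a * (1 - half ^ (k+1))) := by
        intro hcon
        have h5 : dig a x ≤ k := Nat.sInf_le hcon
        omega
      rw [hk]
      linarith [not_lt.1 hnot]
  · rw [endpoint_eq]; exact hmem

def Alist (x : ℝ) : ℕ → List ℕ
  | 0 => []
  | n+1 => Alist x n ++ [dig (Alist x n) x]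

def qOf (x : ℝ) : ℕ → ℕ := fun n => dig (Alist x n) x

lemma restr_qOf (x : ℝ) (n : ℕ) : restr (qOf x) n = Alist x n := by
  induction n with
  | zero => simp [restr_zero, Alist]
  | succ n ih => rw [restr_succ, ih]; rfl

lemma Alist_mem {x : ℝ} (h0 : 0 ≤ x) (h1 : x < 1) (n : ℕ) :
    u (Alist x n) ≤ x ∧ x < u (Alist x n) + len (Alist x n) := by
  induction n with
  | zero => simpa [Alist, u_nil, len_nil] using ⟨h0, h1⟩
  | succ n ih => exact dig_spec (Alist x n) ih.1 ih.2

lemma f0_qOf {x : ℝ} (h0 : 0 ≤ x) (h1 : x < 1) : f0 (qOf x) = x := by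
  have key : ∀ n : ℕ, |f0 (qOf x) - x| < half ^ n := by
    intro n
    obtain ⟨hA1, hA2⟩ := Alist_mem h0 h1 n
    have hf1 : u (Alist x n) ≤ f0 (qOf x) := by rw [← restr_qOf]; exact f0_lb _ n
    have hf2 : f0 (qOf x) < u (Alist x n) + len (Alist x n) := by
      rw [← restr_qOf]; exact f0_ub _ n
    have hlen : len (Alist x n) ≤ half ^ n := by
      have := len_le (Alist x n)
      rwa [← restr_qOf, restr_length, restr_qOf] at this
    rw [abs_sub_lt_iff]
    constructor <;> linarith
  by_contra hne
  have habs : 0 < |f0 (qOf x) - x| := abs_pos.2 (sub_ne_zero.2 hne)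
  obtain ⟨n, hn⟩ := exists_pow_lt_of_lt_one habs half_lt_one
  exact absurd (key n) (not_lt.2 hn.le)

/-! ### The bijection h -/

def tl (q : ℕ → ℕ) : ℕ → ℕ := fun n => q (n+1)

def cns (a : ℕ) (s : ℕ → ℕ) : ℕ → ℕ := fun n => Nat.casesOn n a s

lemma tl_cns (a : ℕ) (s : ℕ → ℕ) : tl (cns a s) = s := rfl
lemma cns_zero (a : ℕ) (s : ℕ → ℕ) : cns a s 0 = a := rfl

def tz : ℕ ≃ ℤ := (Denumerable.eqv ℤ).symm

def hmap (q : ℕ → ℕ) : ℝ := (tz (q 0) : ℝ) + f0 (tl q)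

lemma floor_hmap (q : ℕ → ℕ) : ⌊hmap q⌋ = tz (q 0) := by
  rw [Int.floor_eq_iff]
  constructor
  · simp [hmap, f0_nonneg]
  · have := f0_lt_one (tl q); simp only [hmap]; push_cast; linarith

lemma hmap_inj : Function.Injective hmap := by
  intro q p h
  have h0 : q 0 = p 0 := by
    have := floor_hmap q
    rw [h, floor_hmap p] at this
    exact tz.injective this.symm
  have h1 : f0 (tl q) = f0 (tl p) := by
    have : (tz (q 0) : ℝ) + f0 (tl q) = (tz (p 0) : ℝ) + f0 (tl p) := h
    rw [h0] at this
    linarith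
  have h2 : tl q = tl p := f0_inj h1
  funext n
  cases n with
  | zero => exact h0
  | succ n => exact congrFun h2 n

lemma hmap_surj : Function.Surjective hmap := by
  intro x
  refine ⟨cns (tz.symm ⌊x⌋) (qOf (Int.fract x)), ?_⟩
  have h1 : f0 (qOf (Int.fract x)) = Int.fract x :=
    f0_qOf (Int.fract_nonneg x) (Int.fract_lt_one x)
  simp only [hmap, tl_cns, cns_zero, Equiv.apply_symm_apply, h1]
  exact Int.floor_add_fract x

/-! ### lex order lemmas -/

lemma tri_index_ge {q p : ℕ → ℕ} {n j : ℕ} (hr : restr q n = restr p n)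
    (h1 : restr q j = restr p j) (h2 : q j < p j) : n ≤ j := by
  by_contra hc
  push_neg at hc
  have := restr_eq_iff.1 hr j hc
  omega

lemma tri_trans {q r s : ℕ → ℕ} (h1 : tri q r) (h2 : tri r s) : tri q s := by
  obtain ⟨m, hm1, hm2⟩ := h1
  obtain ⟨m', hm1', hm2'⟩ := h2
  rcases lt_trichotomy m m' with h | h | h
  · refine ⟨m, hm1.trans (restr_eq_iff.2 fun k hk => restr_eq_iff.1 hm1' k (hk.trans h)), ?_⟩
    have := restr_eq_iff.1 hm1' m h
    omega
  · subst h
    exact ⟨m, hm1.trans hm1', by omega⟩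
  · refine ⟨m', (restr_eq_iff.2 fun k hk => restr_eq_iff.1 hm1 k (hk.trans h)).trans hm1', ?_⟩
    have := restr_eq_iff.1 hm1 m' h
    omega

lemma trieq_trans {q r s : ℕ → ℕ} (h1 : trieq q r) (h2 : trieq r s) : trieq q s := by
  rcases h1 with h1 | rfl
  · rcases h2 with h2 | rfl
    · exact Or.inl (tri_trans h1 h2)
    · exact Or.inl h1
  · exact h2

lemma trieq_cns {r r' : ℕ → ℕ} (h0 : r 0 = r' 0) (ht : trieq (tl r) (tl r')) :
    trieq r r' := by
  rcases ht with ⟨m, hm1, hm2⟩ | ht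
  · refine Or.inl ⟨m+1, restr_eq_iff.2 fun k hk => ?_, hm2⟩
    cases k with
    | zero => exact h0
    | succ k => exact restr_eq_iff.1 hm1 k (by omega)
  · refine Or.inr (funext fun n => ?_)
    cases n with
    | zero => exact h0
    | succ n => exact congrFun ht n

/-! ### cut for SchemeS -/

lemma fruit_SchemeS (r : ℕ → ℕ) : fruit SchemeS r = {r} := by
  ext s
  simp only [fruit, SchemeS, Set.mem_iInter, Set.mem_setOf_eq, Set.mem_singleton_iff,
    restr_length]
  constructor
  · intro h
    funext k
    exact restr_eq_iff.1 (h (k+1)) k (by omega)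
  · rintro rfl; intro n; rfl

lemma cut_eq (p : ℕ → ℕ) (n : ℕ) : cut SchemeS p n = rsequences p n := by
  simp only [cut, fruit_SchemeS]
  ext s
  simp

lemma mem_cutU {p r : ℕ → ℕ} {n : ℕ} :
    r ∈ cut SchemeS p n ∪ {p} ↔ trieq p r ∧ restr p n = restr r n := by
  rw [cut_eq]
  constructor
  · rintro (⟨h1, h2⟩ | h)
    · exact ⟨Or.inl h1, h2⟩
    · rcases h with rfl; exact ⟨Or.inr rfl, rfl⟩
  · rintro ⟨h1 | rfl, h2⟩
    · exact Or.inl ⟨h1, h2⟩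
    · exact Or.inr rfl

/-! ### openness criteria -/

lemma isOpen_sorgenfrey_of {O : Set ℝ} (H : ∀ x ∈ O, ∃ b, x < b ∧ Set.Ico x b ⊆ O) :
    IsOpen[sorgenfreyTop] O := by
  letI := sorgenfreyTop
  have : O = ⋃ x : O, Set.Ico (x:ℝ) (Classical.choose (H x x.2)) := by
    ext y
    simp only [Set.mem_iUnion]
    constructor
    · intro hy
      exact ⟨⟨y, hy⟩, le_rfl, (Classical.choose_spec (H y hy)).1⟩
    · rintro ⟨x, hx⟩
      exact (Classical.choose_spec (H x x.2)).2 hx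
  rw [this]
  exact isOpen_iUnion fun x =>
    TopologicalSpace.GenerateOpen.basic _ ⟨_, _, rfl⟩

lemma isOpen_sigmaS_of {O : Set (ℕ → ℕ)} (H : ∀ q ∈ O, ∃ n, cut SchemeS q n ∪ {q} ⊆ O) :
    IsOpen[sigmaS] O := by
  letI := sigmaS
  have : O = ⋃ q : O, (cut SchemeS (q:ℕ→ℕ) (Classical.choose (H q q.2)) ∪ {(q:ℕ→ℕ)}) := by
    ext r
    simp only [Set.mem_iUnion]
    constructor
    · intro hr
      exact ⟨⟨r, hr⟩, Or.inr rfl⟩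
    · rintro ⟨q, hq⟩
      exact Classical.choose_spec (H q q.2) hq
  rw [this]
  exact isOpen_iUnion fun q =>
    TopologicalSpace.GenerateOpen.basic _ ⟨_, _, rfl⟩

/-! ### Continuity -/

def hE : (ℕ → ℕ) ≃ ℝ := Equiv.ofBijective hmap ⟨hmap_inj, hmap_surj⟩

lemma hmap_hE_symm (x : ℝ) : hmap (hE.symm x) = x := hE.apply_symm_apply x

lemma cont1 : Continuous[sigmaS, sorgenfreyTop] hmap := by
  letI := sigmaS
  apply continuous_generateFrom_iff.mpr
  rintro s ⟨a, b, rfl⟩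
  apply isOpen_sigmaS_of
  intro q hq
  simp only [Set.mem_preimage, Set.mem_Ico] at hq
  obtain ⟨m, hm⟩ := exists_pow_lt_of_lt_one (show (0:ℝ) < b - hmap q by linarith) half_lt_one
  refine ⟨m+1, fun r hr => ?_⟩
  rw [mem_cutU] at hr
  obtain ⟨htri, hres⟩ := hr
  rcases htri with htri | rfl
  · obtain ⟨j, hj1, hj2⟩ := htri
    have hjge : m+1 ≤ j := tri_index_ge hres hj1 hj2
    have h00 : r 0 = q 0 := (restr_eq_iff.1 hres 0 (by omega)).symm
    have htl : tri (tl q) (tl r) := by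
      refine ⟨j-1, restr_eq_iff.2 fun k hk => restr_eq_iff.1 hj1 (k+1) (by omega), ?_⟩
      have hj : j - 1 + 1 = j := by omega
      simp only [tl, hj]
      exact hj2
    have hrestrtl : restr (tl r) m = restr (tl q) m :=
      restr_eq_iff.2 fun k hk => (restr_eq_iff.1 hres (k+1) (by omega)).symm
    have hb1 : f0 (tl q) ≤ f0 (tl r) := (f0_strict_mono htl).le
    have hb2 : f0 (tl r) < u (restr (tl q) m) + len (restr (tl q) m) := by
      have := f0_ub (tl r) m
      rwa [hrestrtl] at this
    have hb3 : u (restr (tl q) m) ≤ f0 (tl q) := f0_lb _ m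
    have hb4 : len (restr (tl q) m) ≤ half ^ m := by
      have := len_le (restr (tl q) m)
      rwa [restr_length] at this
    have hval : hmap r = (tz (q 0) : ℝ) + f0 (tl r) := by rw [hmap, h00]
    have hvq : hmap q = (tz (q 0) : ℝ) + f0 (tl q) := rfl
    simp only [Set.mem_preimage, Set.mem_Ico]
    constructor
    · rw [hval]; rw [hvq] at hq; linarith [hq.1]
    · rw [hval]; rw [hvq] at hq hm; linarith [hq.2, hm]
  · exact ⟨hq.1, hq.2⟩

lemma cont2 : Continuous[sorgenfreyTop, sigmaS] ⇑hE.symm := by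
  letI := sorgenfreyTop
  apply continuous_generateFrom_iff.mpr
  rintro s ⟨p, n, rfl⟩
  apply isOpen_sorgenfrey_of
  intro x hx
  rw [Set.mem_preimage, mem_cutU] at hx
  obtain ⟨htri, hres⟩ := hx
  set r := hE.symm x with hrdef
  have hxr : hmap r = x := hmap_hE_symm x
  have hvr : hmap r = (tz (r 0) : ℝ) + f0 (tl r) := rfl
  cases n with
  | zero =>
    refine ⟨(tz (r 0) : ℝ) + 1, ?_, ?_⟩
    · rw [← hxr, hvr]; linarith [f0_lt_one (tl r)]
    · intro y hy
      obtain ⟨hy1, hy2⟩ := hy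
      set r' := hE.symm y with hr'def
      have hyr : hmap r' = y := hmap_hE_symm y
      have hvr' : hmap r' = (tz (r' 0) : ℝ) + f0 (tl r') := rfl
      have hfl : tz (r' 0) = tz (r 0) := by
        have h1 : ⌊y⌋ = tz (r' 0) := by rw [← hyr]; exact floor_hmap r'
        have h2 : ⌊y⌋ = tz (r 0) := by
          rw [Int.floor_eq_iff]
          constructor
          · have := f0_nonneg (tl r)
            rw [← hxr, hvr] at hy1
            linarith
          · push_cast; linarith
        rw [← h1, ← h2]
      have h0 : r' 0 = r 0 := tz.injective hfl
      have hfle : f0 (tl r) ≤ f0 (tl r') := by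
        rw [hvr'] at hyr
        rw [hvr] at hxr
        rw [hfl] at hyr
        linarith
      have htr' : trieq r r' := trieq_cns h0.symm (trieq_of_f0_le hfle)
      rw [Set.mem_preimage, mem_cutU]
      exact ⟨trieq_trans htri htr', by rw [restr_zero, restr_zero]⟩
  | succ m =>
    set c := u (restr (tl r) m) + len (restr (tl r) m) with hc
    have hcle : c ≤ 1 := by
      have h := (nest (restr_prefix (tl r) (Nat.zero_le m))).2
      rw [restr_zero, u_nil, len_nil] at h
      linarith
    refine ⟨(tz (r 0) : ℝ) + c, ?_, ?_⟩
    · rw [← hxr, hvr]; linarith [f0_ub (tl r) m]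
    · intro y hy
      obtain ⟨hy1, hy2⟩ := hy
      set r' := hE.symm y with hr'def
      have hyr : hmap r' = y := hmap_hE_symm y
      have hvr' : hmap r' = (tz (r' 0) : ℝ) + f0 (tl r') := rfl
      have hfl : tz (r' 0) = tz (r 0) := by
        have h1 : ⌊y⌋ = tz (r' 0) := by rw [← hyr]; exact floor_hmap r'
        have h2 : ⌊y⌋ = tz (r 0) := by
          rw [Int.floor_eq_iff]
          constructor
          · have := f0_nonneg (tl r)
            rw [← hxr, hvr] at hy1
            linarith
          · push_cast; linarith
        rw [← h1, ← h2]
      have h0 : r' 0 = r 0 := tz.injective hfl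
      have hfle : f0 (tl r) ≤ f0 (tl r') := by
        rw [hvr'] at hyr
        rw [hvr] at hxr
        rw [hfl] at hyr
        linarith
      have hflt : f0 (tl r') < c := by
        rw [hvr'] at hyr
        rw [hfl] at hyr
        linarith
      have hloc : restr (tl r') m = restr (tl r) m :=
        loc (le_trans (f0_lb (tl r) m) hfle) hflt
      have htr' : trieq r r' := trieq_cns h0.symm (trieq_of_f0_le hfle)
      rw [Set.mem_preimage, mem_cutU]
      refine ⟨trieq_trans htri htr', ?_⟩
      rw [hres]
      apply restr_eq_iff.2
      intro k hk
      cases k with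
      | zero => exact h0.symm
      | succ k => exact (restr_eq_iff.1 hloc k (by omega)).symm
end
end St6

/-- The Sorgenfrey line is homeomorphic to `(ℕ → ℕ, σ_𝕊)`. -/
theorem stmt6 : Nonempty (@Homeomorph ℝ (ℕ → ℕ) sorgenfreyTop sigmaS) := by
  refine ⟨@Homeomorph.mk ℝ (ℕ → ℕ) sorgenfreyTop sigmaS St6.hE.symm ?_ ?_⟩
  · exact St6.cont2
  · exact St6.cont1
end
end
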